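/- Let m ≤ n be positive integers, let λ₁ < λ₂ < ⋯ < λ_{m+1} be elements of Γˣ where λ_{m+1} = ∞ is also allowed, let n ≥ d₀ ≥ d₁ ≥ ⋯ ≥ d_m ≥ 0 be integers, and let W_{i,j} ⊆ Kⁿ for 0 ≤ i ≤ j ≤ m be K-subspaces satisfying: (i) dim W_{i,j} = d_j; (ii) W_{i,j} ⊆ W_{i,i}; (iii) for i < j, Δ(W_{i+1,j}, W_{i,j}) ≤ λ_{i+1}/λ_{j+1}, where in the case λ_{j+1} = ∞ the condition is interpreted as W_{i+1,j} = W_{i,j}. Then there exist K-subspaces V_{i,j} ⊆ Kⁿ for 0 ≤ i ≤ j ≤ m satisfying the same conditions (i)–(iii), such that V_{i,i} = W_{i,i} for all i, and moreover V_{i,j+1} ⊆ V_{i,j} for all 0 ≤ i ≤ j ≤ m−1. -/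

import Mathlib

noncomputable section

open scoped Classical Pointwise

section Preamble

variable {K : Type*} [Field K] {Γ : Type*} [LinearOrderedCommGroupWithZero Γ]

instance (priority := 100) : OrderBot Γ where
  bot := 0
  bot_le _ := zero_le'

/-- The max-valuation on `K^n`: `v(a) = maxᵢ v(aᵢ)`. -/
def vv (v : Valuation K Γ) {n : ℕ} (x : Fin n → K) : Γ :=
  Finset.univ.sup fun i => v (x i)

/-- `rvEq v x y` expresses `rv(x) = rv(y)` in `RV⁽ⁿ⁾ = Kⁿ/∼`, where
`x ∼ y` iff `v(x−y) < v(x)` or `x = y = 0`. -/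
def rvEq (v : Valuation K Γ) {n : ℕ} (x y : Fin n → K) : Prop :=
  vv v (x - y) < vv v x ∨ (x = 0 ∧ y = 0)

/-- Balls in `K` (with `K` itself counting as a ball). -/
def IsBall1 (v : Valuation K Γ) (B : Set K) : Prop :=
  B = Set.univ ∨ ∃ a : K, ∃ γ : Γ, γ ≠ 0 ∧
    (B = {x | v (x - a) < γ} ∨ B = {x | v (x - a) ≤ γ})

/-- Balls in `Kⁿ` (with `Kⁿ` itself counting as a ball). -/
def IsBall (v : Valuation K Γ) {n : ℕ} (B : Set (Fin n → K)) : Prop :=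
  B = Set.univ ∨ ∃ a : Fin n → K, ∃ γ : Γ, γ ≠ 0 ∧
    (B = {x | vv v (x - a) < γ} ∨ B = {x | vv v (x - a) ≤ γ})

/-- Spherical completeness: every nonempty chain of balls in `K` has nonempty
intersection. -/
def SphericallyComplete (v : Valuation K Γ) : Prop :=
  ∀ C : Set (Set K), C.Nonempty → (∀ B ∈ C, IsBall1 v B) → IsChain (· ⊆ ·) C →
    (⋂ B ∈ C, B).Nonempty

/-- The residue field `K̄` of the valuation ring `𝒪 = {x | v x ≤ 1}`. -/
def Kbar (v : Valuation K Γ) : Type _ :=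
  IsLocalRing.ResidueField v.valuationSubring

instance (v : Valuation K Γ) : Field (Kbar v) :=
  inferInstanceAs (Field (IsLocalRing.ResidueField v.valuationSubring))

/-- The residue map `res : 𝒪 → K̄`, extended by the junk value `0` outside `𝒪`. -/
def res' (v : Valuation K Γ) (x : K) : Kbar v :=
  if h : v x ≤ 1 then IsLocalRing.residue v.valuationSubring ⟨x, h⟩ else 0

/-- The coordinatewise residue map on `Kⁿ`. -/
def resv (v : Valuation K Γ) {n : ℕ} (x : Fin n → K) : Fin n → Kbar v :=
  fun i => res' v (x i)

/-- `res(S)` for a set `S ⊆ Kⁿ`: the set of residues of points of `S ∩ 𝒪ⁿ`. -/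
def resSet (v : Valuation K Γ) {n : ℕ} (S : Set (Fin n → K)) : Set (Fin n → Kbar v) :=
  resv v '' {x ∈ S | ∀ i, v (x i) ≤ 1}

/-- `dir(x) = res(K·x) ⊆ K̄ⁿ`. -/
def dirSet (v : Valuation K Γ) {n : ℕ} (x : Fin n → K) : Set (Fin n → Kbar v) :=
  resSet v {y | ∃ c : K, y = c • x}

/-- The coordinate projection `Kⁿ → K^d` selecting the coordinates `σ 0 < σ 1 < ⋯`. -/
def proj {A : Type*} {n d : ℕ} (σ : Fin d → Fin n) (x : Fin n → A) : Fin d → A :=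
  fun k => x (σ k)

/-- `σ` (a strictly increasing selection of `d` of the `n` coordinates) is an
exhibition of the `K̄`-subspace `Ū ⊆ K̄ⁿ` if the corresponding coordinate projection
`K̄ⁿ → K̄^d` restricts to an isomorphism from `Ū` onto `K̄^d`. -/
def IsExhibition (v : Valuation K Γ) {n d : ℕ} (σ : Fin d → Fin n)
    (Ubar : Submodule (Kbar v) (Fin n → Kbar v)) : Prop :=
  StrictMono σ ∧ Set.BijOn (proj σ) (Ubar : Set (Fin n → Kbar v)) Set.univ

/-- `affdir(C)`: the `K̄`-subspace of `K̄ⁿ` generated by all `dir(x − x')`, `x, x' ∈ C`. -/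
def affdir (v : Valuation K Γ) {n : ℕ} (C : Set (Fin n → K)) :
    Submodule (Kbar v) (Fin n → Kbar v) :=
  Submodule.span (Kbar v) (⋃ x ∈ C, ⋃ x' ∈ C, dirSet v (x - x'))

/-- A matrix has entries in the valuation ring `𝒪`. -/
def EntriesInO (v : Valuation K Γ) {n : ℕ} (M : Matrix (Fin n) (Fin n) K) : Prop :=
  ∀ i j, v (M i j) ≤ 1

/-- `M ∈ GLₙ(𝒪)`: `M` is invertible, with entries in `𝒪`, and its inverse also has
entries in `𝒪`. -/
def MemGLO (v : Valuation K Γ) {n : ℕ} (M : Matrix (Fin n) (Fin n) K) : Prop :=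
  EntriesInO v M ∧ ∃ N : Matrix (Fin n) (Fin n) K,
    M * N = 1 ∧ N * M = 1 ∧ EntriesInO v N

/-- The entrywise residue matrix of `M`. -/
def resM (v : Valuation K Γ) {n : ℕ} (M : Matrix (Fin n) (Fin n) K) :
    Matrix (Fin n) (Fin n) (Kbar v) :=
  fun i j => res' v (M i j)

/-- `DeltaLE v U W γ` expresses `Δ(U, W) ≤ γ`: for every `u ∈ U` there is `w ∈ W`
with `v(u − w) ≤ v(u)·γ`. -/
def DeltaLE (v : Valuation K Γ) {n : ℕ} (U W : Submodule K (Fin n → K)) (γ : Γ) : Prop :=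
  ∀ u ∈ U, ∃ w ∈ W, vv v (u - w) ≤ vv v u * γ

/-- `IsDelta v U W γ` expresses `Δ(U, W) = γ`: `γ` is the minimum of all admissible
bounds. -/
def IsDelta (v : Valuation K Γ) {n : ℕ} (U W : Submodule K (Fin n → K)) (γ : Γ) : Prop :=
  DeltaLE v U W γ ∧ ∀ δ : Γ, DeltaLE v U W δ → γ ≤ δ

end Preamble

variable {K : Type*} [Field K] {Γ : Type*} [LinearOrderedCommGroupWithZero Γ]

/-- Condition (iii) of Statement 2: `Δ(U, W) ≤ a/b`, where in the case `b = ∞`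
the condition is interpreted as `U = W`. -/
def CondIII (v : Valuation K Γ) {n : ℕ} (U W : Submodule K (Fin n → K))
    (a b : WithTop Γ) : Prop :=
  if b = ⊤ then U = W
  else ∃ a' b' : Γ, a = (a' : WithTop Γ) ∧ b = (b' : WithTop Γ) ∧ DeltaLE v U W (a' / b')

namespace Aux

variable (v : Valuation K Γ) {n : ℕ}

lemma le_vv (x : Fin n → K) (i : Fin n) : v (x i) ≤ vv v x := by
  exact Finset.le_sup (f := fun i => v (x i)) (Finset.mem_univ i)

lemma vv_le {x : Fin n → K} {γ : Γ} (h : ∀ i, v (x i) ≤ γ) : vv v x ≤ γ :=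
  Finset.sup_le fun i _ => h i

@[simp] lemma vv_zero : vv v (0 : Fin n → K) = 0 := by
  apply le_antisymm (vv_le v fun i => by simp) (zero_le')

lemma vv_eq_zero_iff {x : Fin n → K} : vv v x = 0 ↔ x = 0 := by
  constructor
  · intro h
    funext i
    have := le_vv v x i
    rw [h, le_zero_iff] at this
    simpa using (v.zero_iff.mp this)
  · rintro rfl; simp

lemma vv_neg (x : Fin n → K) : vv v (-x) = vv v x := by
  unfold vv; congr 1; funext i; simp

lemma vv_add_le (x y : Fin n → K) : vv v (x + y) ≤ max (vv v x) (vv v y) := by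
  apply vv_le
  intro i
  refine le_trans (v.map_add _ _) ?_
  exact max_le_max (le_vv v x i) (le_vv v y i)

lemma vv_sub_le (x y : Fin n → K) : vv v (x - y) ≤ max (vv v x) (vv v y) := by
  rw [sub_eq_add_neg]
  simpa [vv_neg] using vv_add_le v x (-y)

lemma vv_smul (c : K) (x : Fin n → K) : vv v (c • x) = v c * vv v x := by
  apply le_antisymm
  · apply vv_le
    intro i
    simp only [Pi.smul_apply, smul_eq_mul, map_mul]
    exact mul_le_mul_right (le_vv v x i) _
  · rcases eq_or_ne (v c) 0 with hc | hc
    · simp [hc]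
    rcases (Finset.univ : Finset (Fin n)).eq_empty_or_nonempty with he | hne
    · have : vv v x = 0 := by unfold vv; rw [he, Finset.sup_empty]; exact (bot_unique zero_le').symm
      simp [this]
    · obtain ⟨i, _, hi⟩ := Finset.exists_mem_eq_sup Finset.univ hne fun i => v (x i)
      rw [show vv v x = v (x i) from hi]
      refine le_trans (le_of_eq ?_) (le_vv v (c • x) i)
      simp [map_mul]

lemma vv_sum_le {ι : Type*} (s : Finset ι) (f : ι → Fin n → K) :
    vv v (∑ k ∈ s, f k) ≤ s.sup fun k => vv v (f k) := by
  induction s using Finset.cons_induction with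
  | empty => simp; exact bot_unique zero_le'
  | cons a s ha ih =>
    rw [Finset.sum_cons, Finset.sup_cons]
    exact le_trans (vv_add_le v _ _) (max_le_max le_rfl ih)

-- v of a sum with one strictly dominant term
lemma vv_sub_lt_of {x y : Fin n → K} (h : vv v (y - x) < vv v x) : vv v y = vv v x := by
  have h1 : vv v y ≤ vv v x := by
    have : y = (y - x) + x := by ring
    rw [this]
    exact le_trans (vv_add_le v _ _) (max_le (le_of_lt h) le_rfl)
  refine le_antisymm h1 ?_
  by_contra hc
  push_neg at hc
  have h2 : y - (y - x) = x := by ring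
  have h3 := vv_sub_le v y (y - x)
  rw [h2] at h3
  rcases max_cases (vv v y) (vv v (y - x)) with ⟨he, _⟩ | ⟨he, _⟩ <;> rw [he] at h3
  · exact absurd (lt_of_le_of_lt h3 hc) (lt_irrefl _)
  · exact absurd (lt_of_le_of_lt h3 h) (lt_irrefl _)

end Aux

section TFam

variable (v : Valuation K Γ) {n : ℕ}
open Aux

/-- A "triangular orthogonal" family of vectors with pivot coordinates. -/
def TFam (s : ℕ) (b : ℕ → Fin n → K) (p : ℕ → Fin n) : Prop :=
  (∀ k, k < s → v (b k (p k)) = vv v (b k)) ∧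
  (∀ k, k < s → vv v (b k) ≠ 0) ∧
  (∀ k l, k < l → l < s → v (b l (p k)) < vv v (b l))

lemma tfam_mono {s s' : ℕ} {b : ℕ → Fin n → K} {p : ℕ → Fin n}
    (h : TFam v s b p) (hs : s' ≤ s) : TFam v s' b p :=
  ⟨fun k hk => h.1 k (lt_of_lt_of_le hk hs), fun k hk => h.2.1 k (lt_of_lt_of_le hk hs),
   fun k l hkl hl => h.2.2 k l hkl (lt_of_lt_of_le hl hs)⟩

/-- Orthogonality: the valuation of a combination is the max of the terms, and
(if nonzero) it is witnessed at a pivot coordinate. -/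
lemma tfam_sum {s : ℕ} {b : ℕ → Fin n → K} {p : ℕ → Fin n}
    (h : TFam v s b p) (c : ℕ → K) :
    vv v (∑ k ∈ Finset.range s, c k • b k)
      = (Finset.range s).sup (fun k => v (c k) * vv v (b k)) ∧
    ((Finset.range s).sup (fun k => v (c k) * vv v (b k)) ≠ 0 →
      ∃ k₀ < s, v ((∑ k ∈ Finset.range s, c k • b k) (p k₀))
        = (Finset.range s).sup (fun k => v (c k) * vv v (b k))) := by
  set μ := (Finset.range s).sup (fun k => v (c k) * vv v (b k)) with hμ
  have hle : vv v (∑ k ∈ Finset.range s, c k • b k) ≤ μ := by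
    refine le_trans (vv_sum_le v _ _) ?_
    apply Finset.sup_le
    intro k hk
    rw [vv_smul]
    exact Finset.le_sup (f := fun k => v (c k) * vv v (b k)) hk
  rcases eq_or_ne μ 0 with h0 | h0
  · constructor
    · rw [h0]; exact le_antisymm (h0 ▸ hle) zero_le'
    · intro hc; exact absurd h0 hc
  · -- choose the least k₀ attaining the sup
    have hex : ∃ k, k < s ∧ v (c k) * vv v (b k) = μ := by
      have hne : (Finset.range s).Nonempty := by
        rcases Finset.eq_empty_or_nonempty (Finset.range s) with he | hne
        · rw [hμ, he] at h0; exact absurd (by rw [Finset.sup_empty]; exact (bot_unique zero_le').symm) h0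
        · exact hne
      obtain ⟨k, hk, hk2⟩ := Finset.exists_mem_eq_sup _ hne fun k => v (c k) * vv v (b k)
      exact ⟨k, Finset.mem_range.mp hk, hk2.symm⟩
    classical
    let k₀ := Nat.find hex
    obtain ⟨hk₀s, hk₀max⟩ : k₀ < s ∧ v (c k₀) * vv v (b k₀) = μ := Nat.find_spec hex
    -- compute the coordinate p k₀
    have hcoord : v ((∑ k ∈ Finset.range s, c k • b k) (p k₀)) = μ := by
      have hsum : (∑ k ∈ Finset.range s, c k • b k) (p k₀)
          = ∑ k ∈ Finset.range s, c k * b k (p k₀) := by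
        rw [Finset.sum_apply]; rfl
      rw [hsum]
      have hmem : k₀ ∈ Finset.range s := Finset.mem_range.mpr hk₀s
      rw [← Finset.add_sum_erase _ _ hmem]
      have hrest : v (∑ k ∈ (Finset.range s).erase k₀, c k * b k (p k₀)) < μ := by
        apply Valuation.map_sum_lt _ h0
        intro k hk
        have hks : k < s := Finset.mem_range.mp (Finset.mem_of_mem_erase hk)
        have hne : k ≠ k₀ := Finset.ne_of_mem_erase hk
        rcases lt_or_gt_of_ne hne with hlt | hgt
        · -- k < k₀ : not a maximizer, so strictly below μ
          have hnmax : v (c k) * vv v (b k) ≠ μ := by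
            intro he
            exact absurd (Nat.find_min hex hlt ⟨hks, he⟩) (fun h => h)
          have hmax : v (c k) * vv v (b k) ≤ μ :=
            Finset.le_sup (f := fun k => v (c k) * vv v (b k)) (Finset.mem_range.mpr hks)
          calc v (c k * b k (p k₀)) ≤ v (c k) * vv v (b k) := by
                rw [map_mul]; exact mul_le_mul_right (le_vv v _ _) _
            _ < μ := lt_of_le_of_ne hmax hnmax
        · -- k > k₀ : pivot condition gives strict inequality
          rcases eq_or_ne (v (c k)) 0 with hc0 | hc0
          · rw [map_mul, hc0, zero_mul]; exact zero_lt_iff.mpr h0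
          · have hpiv : v (b k (p k₀)) < vv v (b k) := h.2.2 k₀ k hgt hks
            calc v (c k * b k (p k₀)) = v (c k) * v (b k (p k₀)) := map_mul _ _ _
              _ < v (c k) * vv v (b k) :=
                  mul_lt_mul_of_pos_left hpiv (zero_lt_iff.mpr hc0)
              _ ≤ μ := Finset.le_sup (f := fun k => v (c k) * vv v (b k))
                    (Finset.mem_range.mpr hks)
      have hhead : v (c k₀ * b k₀ (p k₀)) = μ := by
        rw [map_mul, h.1 k₀ hk₀s, hk₀max]
      rw [Valuation.map_add_eq_of_lt_left _ (by rw [hhead]; exact hrest), hhead]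
    have hgev : μ ≤ vv v (∑ k ∈ Finset.range s, c k • b k) := by
      rw [← hcoord]; exact le_vv v _ _
    exact ⟨le_antisymm hle hgev, fun _ => ⟨k₀, hk₀s, hcoord⟩⟩

lemma tfam_sum_eq {s : ℕ} {b : ℕ → Fin n → K} {p : ℕ → Fin n}
    (h : TFam v s b p) (c : ℕ → K) :
    vv v (∑ k ∈ Finset.range s, c k • b k)
      = (Finset.range s).sup (fun k => v (c k) * vv v (b k)) :=
  (tfam_sum v h c).1

lemma tfam_linearIndependent {s s' : ℕ} {b : ℕ → Fin n → K} {p : ℕ → Fin n}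
    (h : TFam v s b p) (hs : s' ≤ s) :
    LinearIndependent K (fun k : Fin s' => b k) := by
  have h' := tfam_mono v h hs
  rw [Fintype.linearIndependent_iff]
  intro g hg k
  set c : ℕ → K := fun k => if hk : k < s' then g ⟨k, hk⟩ else 0 with hc
  have hsum : ∑ k ∈ Finset.range s', c k • b k = 0 := by
    have heq : ∑ k ∈ Finset.range s', c k • b k = ∑ k : Fin s', g k • b (k : ℕ) := by
      rw [← Fin.sum_univ_eq_sum_range (fun k => c k • b k) s']
      apply Finset.sum_congr rfl
      intro k _
      simp [hc, k.2]
    rw [heq, hg]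
  have := tfam_sum_eq v h' c
  rw [hsum, vv_zero] at this
  have hk' : v (c k.1) * vv v (b k.1) ≤ 0 := by
    rw [this]
    exact Finset.le_sup (f := fun k => v (c k) * vv v (b k)) (Finset.mem_range.mpr k.2)
  rw [le_zero_iff, mul_eq_zero] at hk'
  rcases hk' with hk' | hk'
  · have : c k.1 = 0 := v.zero_iff.mp hk'
    rw [hc] at this
    simpa [k.2] using this
  · exact absurd hk' (h'.2.1 k.1 k.2)

end TFam

section Extend

variable (v : Valuation K Γ) {n : ℕ}
open Aux

lemma tfam_extend {s : ℕ} {b : ℕ → Fin n → K} {p : ℕ → Fin n}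
    (U : Submodule K (Fin n → K)) (h : TFam v s b p) (hmem : ∀ k, k < s → b k ∈ U)
    (hs : s < Module.finrank K U) :
    ∃ (x : Fin n → K) (q : Fin n), x ∈ U ∧
      TFam v (s + 1) (Function.update b s x) (Function.update p s q) := by
  classical
  set S : Submodule K (Fin n → K) := Submodule.span K (Set.range fun k : Fin s => b k) with hS
  have hSU : S ≤ U := by
    rw [hS, Submodule.span_le]
    rintro x ⟨k, rfl⟩
    exact hmem k k.2
  have hli : LinearIndependent K (fun k : Fin s => b (k : ℕ)) :=
    tfam_linearIndependent v h le_rfl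
  have hfrS : Module.finrank K S = s := by
    rw [hS, finrank_span_eq_card hli, Fintype.card_fin]
  -- pick u ∈ U \ S
  have hne : S ≠ U := fun he => by rw [← he, hfrS] at hs; exact absurd hs (lt_irrefl _)
  obtain ⟨u, huU, huS⟩ : ∃ u, u ∈ U ∧ u ∉ S := by
    by_contra hcon
    push_neg at hcon
    exact hne (le_antisymm hSU fun x hx => hcon x hx)
  -- the pivot projection, restricted to S, is bijective
  set φ : (Fin n → K) →ₗ[K] (Fin s → K) := LinearMap.pi (fun k => LinearMap.proj (p k)) with hφ
  have hinj : Function.Injective (φ.domRestrict S) := by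
    rw [← LinearMap.ker_eq_bot]
    rw [Submodule.eq_bot_iff]
    rintro ⟨x, hxS⟩ hx
    rw [LinearMap.mem_ker] at hx
    have hx' : ∀ k : Fin s, x (p k) = 0 := fun k => congrFun hx k
    obtain ⟨c, hc⟩ := (Submodule.mem_span_range_iff_exists_fun K).mp hxS
    set c' : ℕ → K := fun k => if hk : k < s then c ⟨k, hk⟩ else 0 with hc'
    have hxc : x = ∑ k ∈ Finset.range s, c' k • b k := by
      rw [← hc, ← Fin.sum_univ_eq_sum_range (fun k => c' k • b k) s]
      apply Finset.sum_congr rfl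
      intro k _
      simp [hc', k.2]
    have hzero : x = 0 := by
      by_contra hx0
      have hvv : vv v x ≠ 0 := fun hv0 => hx0 ((vv_eq_zero_iff v).mp hv0)
      have := tfam_sum v h c'
      rw [← hxc] at this
      obtain ⟨k₀, hk₀, hk₀v⟩ := this.2 (by rw [← this.1]; exact hvv)
      rw [hx' ⟨k₀, hk₀⟩] at hk₀v
      rw [← this.1] at hk₀v
      simp at hk₀v
      exact hvv hk₀v.symm
    simp [hzero]
  have hsurj : Function.Surjective (φ.domRestrict S) := by
    have hfr : Module.finrank K S = Module.finrank K (Fin s → K) := by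
      rw [hfrS, Module.finrank_fin_fun]
    exact (LinearMap.injective_iff_surjective_of_finrank_eq_finrank hfr).mp hinj
  obtain ⟨⟨y, hyS⟩, hy⟩ := hsurj (φ u)
  set x : Fin n → K := u - y with hx
  have hxU : x ∈ U := Submodule.sub_mem U huU (hSU hyS)
  have hx0 : x ≠ 0 := by
    intro h0
    have : u = y := by rwa [hx, sub_eq_zero] at h0
    exact huS (this ▸ hyS)
  have hxpiv : ∀ k : Fin s, x (p k) = 0 := by
    intro k
    have hy' : φ y = φ u := hy
    have : y (p k) = u (p k) := congrFun hy' k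
    simp [hx, Pi.sub_apply, this]
  have hvvx : vv v x ≠ 0 := fun hv0 => hx0 ((vv_eq_zero_iff v).mp hv0)
  -- pick the coordinate attaining the sup
  have hneu : (Finset.univ : Finset (Fin n)).Nonempty := by
    rcases (Finset.univ : Finset (Fin n)).eq_empty_or_nonempty with he | hne
    · exfalso; apply hvvx; unfold vv; rw [he, Finset.sup_empty]; exact (bot_unique zero_le').symm
    · exact hne
  obtain ⟨q, _, hq⟩ := Finset.exists_mem_eq_sup Finset.univ hneu fun i => v (x i)
  have hqx : v (x q) = vv v x := hq.symm
  refine ⟨x, q, hxU, ?_, ?_, ?_⟩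
  · intro k hk
    rcases Nat.lt_succ_iff_lt_or_eq.mp hk with hk | rfl
    · rw [Function.update_of_ne (Nat.ne_of_lt hk), Function.update_of_ne (Nat.ne_of_lt hk)]
      exact h.1 k hk
    · rw [Function.update_self, Function.update_self]
      exact hqx
  · intro k hk
    rcases Nat.lt_succ_iff_lt_or_eq.mp hk with hk | rfl
    · rw [Function.update_of_ne (Nat.ne_of_lt hk)]
      exact h.2.1 k hk
    · rw [Function.update_self]
      exact hvvx
  · intro k l hkl hl
    rcases Nat.lt_succ_iff_lt_or_eq.mp hl with hl | rfl
    · rw [Function.update_of_ne (Nat.ne_of_lt hl)]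
      rw [Function.update_of_ne (Nat.ne_of_lt (lt_trans hkl hl))]
      exact h.2.2 k l hkl hl
    · rw [Function.update_self]
      rw [Function.update_of_ne (Nat.ne_of_lt hkl)]
      have h0 : x (p k) = 0 := hxpiv ⟨k, hkl⟩
      rw [h0, map_zero]
      exact zero_lt_iff.mpr hvvx

end Extend

section Build

variable (v : Valuation K Γ) {n : ℕ}
open Aux

lemma tfam_complete (U : Submodule K (Fin n → K)) :
    ∀ t (s : ℕ) (b : ℕ → Fin n → K) (p : ℕ → Fin n), TFam v s b p →
      (∀ k, k < s → b k ∈ U) → s + t = Module.finrank K U →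
      ∃ (b' : ℕ → Fin n → K) (p' : ℕ → Fin n),
        TFam v (Module.finrank K U) b' p' ∧
        (∀ k, k < Module.finrank K U → b' k ∈ U) ∧
        (∀ k, k < s → b' k = b k ∧ p' k = p k) := by
  intro t
  induction t with
  | zero =>
    intro s b p h hmem hs
    rw [Nat.add_zero] at hs
    exact ⟨b, p, hs ▸ h, fun k hk => hmem k (hs ▸ hk), fun k _ => ⟨rfl, rfl⟩⟩
  | succ t ih =>
    intro s b p h hmem hs
    have hlt : s < Module.finrank K U := by omega
    obtain ⟨x, q, hxU, hT⟩ := tfam_extend v U h hmem hlt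
    have hmem' : ∀ k, k < s + 1 → Function.update b s x k ∈ U := by
      intro k hk
      rcases Nat.lt_succ_iff_lt_or_eq.mp hk with hk | rfl
      · rw [Function.update_of_ne (Nat.ne_of_lt hk)]; exact hmem k hk
      · rw [Function.update_self]; exact hxU
    obtain ⟨b', p', h1, h2, h3⟩ := ih (s + 1) _ _ hT hmem' (by omega)
    refine ⟨b', p', h1, h2, fun k hk => ?_⟩
    obtain ⟨e1, e2⟩ := h3 k (by omega)
    rw [e1, e2, Function.update_of_ne (Nat.ne_of_lt hk), Function.update_of_ne (Nat.ne_of_lt hk)]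
    exact ⟨rfl, rfl⟩

lemma tfam_perturb {s : ℕ} {b b' : ℕ → Fin n → K} {p : ℕ → Fin n}
    (h : TFam v s b p) (hp : ∀ k, k < s → vv v (b' k - b k) < vv v (b k)) :
    TFam v s b' p := by
  have hvv : ∀ k, k < s → vv v (b' k) = vv v (b k) := fun k hk =>
    Aux.vv_sub_lt_of v (hp k hk)
  refine ⟨?_, ?_, ?_⟩
  · intro k hk
    have h1 : v ((b' k - b k) (p k)) < v (b k (p k)) := by
      rw [h.1 k hk]
      exact lt_of_le_of_lt (Aux.le_vv v _ _) (hp k hk)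
    have : b' k (p k) = b k (p k) + (b' k - b k) (p k) := by simp
    rw [this, Valuation.map_add_eq_of_lt_left _ h1, h.1 k hk, hvv k hk]
  · intro k hk
    rw [hvv k hk]; exact h.2.1 k hk
  · intro k l hkl hl
    have hbl : v (b' l (p k)) ≤ max (v (b l (p k))) (v ((b' l - b l) (p k))) := by
      have : b' l (p k) = b l (p k) + (b' l - b l) (p k) := by simp
      rw [this]
      exact v.map_add _ _
    rw [hvv l hl]
    refine lt_of_le_of_lt hbl (max_lt (h.2.2 k l hkl hl) ?_)
    exact lt_of_le_of_lt (Aux.le_vv v _ _) (hp l hl)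

end Build

/-- one can straighten the subspaces `W i j` into a decreasing family
`V i j` with the same properties.  Here `lam k` stands for `λ_{k+1}` (`k = 0, …, m`),
so `λ₁ < ⋯ < λ_{m+1}` (with `λ_{m+1} = ∞` allowed) and `d k` stands for `d_k`. -/
theorem straighten_subspaces
    (v : Valuation K Γ) {n m : ℕ} (hm : 1 ≤ m) (hmn : m ≤ n)
    (lam : ℕ → WithTop Γ) (hlam0 : ∀ k ≤ m, lam k ≠ 0)
    (hlammono : ∀ k < m, lam k < lam (k + 1))
    (d : ℕ → ℕ) (hd0 : d 0 ≤ n) (hdmono : ∀ k < m, d (k + 1) ≤ d k)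
    (W : ℕ → ℕ → Submodule K (Fin n → K))
    (hWdim : ∀ i j, i ≤ j → j ≤ m → Module.finrank K (W i j) = d j)
    (hWsub : ∀ i j, i ≤ j → j ≤ m → W i j ≤ W i i)
    (hWdelta : ∀ i j, i < j → j ≤ m → CondIII v (W (i+1) j) (W i j) (lam i) (lam j)) :
    ∃ V : ℕ → ℕ → Submodule K (Fin n → K),
      (∀ i j, i ≤ j → j ≤ m → Module.finrank K (V i j) = d j) ∧
      (∀ i j, i ≤ j → j ≤ m → V i j ≤ V i i) ∧
      (∀ i j, i < j → j ≤ m → CondIII v (V (i+1) j) (V i j) (lam i) (lam j)) ∧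
      (∀ i ≤ m, V i i = W i i) ∧
      (∀ i j, i ≤ j → j + 1 ≤ m → V i (j+1) ≤ V i j) := by
  classical
  have hn : 0 < n := lt_of_lt_of_le hm hmn
  -- monotonicity of `lam` and `d`
  have hlam_lt : ∀ a b, a < b → b ≤ m → lam a < lam b := by
    intro a b hab hbm
    induction b with
    | zero => omega
    | succ b ih =>
      rcases Nat.lt_succ_iff_lt_or_eq.mp hab with h | rfl
      · exact lt_trans (ih h (by omega)) (hlammono b (by omega))
      · exact hlammono a (by omega)
  have hlam_le : ∀ a b, a ≤ b → b ≤ m → lam a ≤ lam b := by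
    intro a b hab hbm
    rcases eq_or_lt_of_le hab with rfl | h
    · exact le_rfl
    · exact le_of_lt (hlam_lt a b h hbm)
  have hd_le : ∀ a b, a ≤ b → b ≤ m → d b ≤ d a := by
    intro a b hab hbm
    induction b with
    | zero => have : a = 0 := Nat.le_zero.mp hab; subst this; exact le_rfl
    | succ b ih =>
      rcases Nat.lt_succ_iff_lt_or_eq.mp (Nat.lt_succ_of_le hab) with h | rfl
      · exact le_trans (hdmono b (by omega)) (ih (by omega) (by omega))
      · exact le_rfl
  -- the level of an index k : the largest j ≤ m with k < d j
  set lev : ℕ → ℕ := fun k => Nat.findGreatest (fun j => k < d j) m with hlev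
  have hlev_ge : ∀ k i, i ≤ m → k < d i → i ≤ lev k := by
    intro k i him hk
    exact Nat.le_findGreatest (P := fun j => k < d j) him hk
  have hlev_le : ∀ k, lev k ≤ m := fun k => Nat.findGreatest_le m
  have hlev_spec : ∀ k i, i ≤ m → k < d i → k < d (lev k) := by
    intro k i him hk
    exact Nat.findGreatest_spec (P := fun j => k < d j) him hk
  -- the approximation constants
  set dd : ℕ → ℕ → Γ := fun i L => WithTop.untopD 0 (lam i) / WithTop.untopD 0 (lam L) with hdd
  -- single-step approximation
  have happrox : ∀ i L, i < L → L ≤ m → ∀ x ∈ W (i+1) L, x ≠ 0 →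
      ∃ w ∈ W i L, vv v (w - x) ≤ vv v x * dd i L ∧ vv v (w - x) < vv v x := by
    intro i L hiL hLm x hx hx0
    have hvvx : vv v x ≠ 0 := fun h0 => hx0 ((Aux.vv_eq_zero_iff v).mp h0)
    have hC := hWdelta i L hiL hLm
    unfold CondIII at hC
    by_cases hT : lam L = ⊤
    · rw [if_pos hT] at hC
      refine ⟨x, hC ▸ hx, ?_, ?_⟩
      · simp
      · simpa using zero_lt_iff.mpr hvvx
    · rw [if_neg hT] at hC
      obtain ⟨a', b', ha, hb, hD⟩ := hC
      obtain ⟨w, hw, hvv⟩ := hD x hx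
      have hdd' : dd i L = a' / b' := by
        rw [hdd]; simp only [ha, hb, WithTop.untopD_coe]
      have ha0 : a' ≠ 0 := by
        intro h0
        exact hlam0 i (by omega) (by rw [ha, h0]; rfl)
      have hb0 : b' ≠ 0 := by
        intro h0
        exact hlam0 L hLm (by rw [hb, h0]; rfl)
      have hab : a' < b' := by
        have := hlam_lt i L hiL hLm
        rw [ha, hb] at this
        exact_mod_cast this
      have hlt1 : a' / b' < 1 := by
        rw [div_lt_iff₀ (zero_lt_iff.mpr hb0), one_mul]
        exact hab
      have hwx : vv v (w - x) ≤ vv v x * (a' / b') := by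
        rw [show w - x = -(x - w) by ring, Aux.vv_neg]
        exact hvv
      refine ⟨w, hw, by rw [hdd']; exact hwx, ?_⟩
      refine lt_of_le_of_lt hwx ?_
      calc vv v x * (a' / b') < vv v x * 1 :=
            mul_lt_mul_of_pos_left hlt1 (zero_lt_iff.mpr hvvx)
        _ = vv v x := mul_one _
  -- main downward induction on rows
  have main : ∀ t, t ≤ m → ∃ (B : ℕ → ℕ → (Fin n → K)) (P : ℕ → ℕ → Fin n),
      (∀ i', m - t ≤ i' → i' ≤ m →
        TFam v (d i') (B i') (P i') ∧ ∀ k, k < d i' → B i' k ∈ W i' (lev k)) ∧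
      (∀ i', m - t ≤ i' → i' + 1 ≤ m → ∀ k, k < d (i'+1) →
        vv v (B i' k - B (i'+1) k) ≤ vv v (B (i'+1) k) * dd i' (lev k)) := by
    intro t
    induction t with
    | zero =>
      intro _
      have h0 : TFam v 0 (fun _ => (0 : Fin n → K)) (fun _ => (⟨0, hn⟩ : Fin n)) :=
        ⟨fun k hk => absurd hk (Nat.not_lt_zero k), fun k hk => absurd hk (Nat.not_lt_zero k),
         fun _ l _ hl => absurd hl (Nat.not_lt_zero l)⟩
      have hfr : Module.finrank K (W m m) = d m := hWdim m m le_rfl le_rfl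
      obtain ⟨b', p', hT, hmem, _⟩ := tfam_complete v (W m m) (Module.finrank K (W m m)) 0 _ _
        h0 (fun k hk => absurd hk (Nat.not_lt_zero k)) (by omega)
      rw [hfr] at hT hmem
      refine ⟨fun _ => b', fun _ => p', ?_, ?_⟩
      · intro i' h1 h2
        have hIm : m = i' := by omega
        subst hIm
        refine ⟨hT, fun k hk => ?_⟩
        have hlevk : lev k = m := le_antisymm (hlev_le k) (hlev_ge k m le_rfl hk)
        rw [hlevk]
        exact hmem k hk
      · intro i' h1 h2 k hk
        exact absurd h2 (by omega)
    | succ t ih =>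
      intro ht
      obtain ⟨B, P, hrow, hrel⟩ := ih (by omega)
      set i := m - (t+1) with hi
      have hi1 : i + 1 = m - t := by omega
      have him : i ≤ m := by omega
      have hi1m : i + 1 ≤ m := by omega
      obtain ⟨hT1, hmem1⟩ := hrow (i+1) (by omega) hi1m
      have hch : ∀ k, k < d (i+1) → ∃ w, w ∈ W i (lev k) ∧
          vv v (w - B (i+1) k) ≤ vv v (B (i+1) k) * dd i (lev k) ∧
          vv v (w - B (i+1) k) < vv v (B (i+1) k) := by
        intro k hk
        have hlevk1 : i + 1 ≤ lev k := hlev_ge k (i+1) hi1m hk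
        have hnz : B (i+1) k ≠ 0 := fun h0 => hT1.2.1 k hk (by rw [h0]; exact Aux.vv_zero v)
        obtain ⟨w, hw, h1, h2⟩ := happrox i (lev k) (by omega) (hlev_le k) _ (hmem1 k hk) hnz
        exact ⟨w, hw, h1, h2⟩
      set w : ℕ → Fin n → K :=
        fun k => if h : k < d (i+1) then (hch k h).choose else 0 with hwdef
      have hwmem : ∀ k, k < d (i+1) → w k ∈ W i (lev k) := by
        intro k hk
        rw [hwdef]; simp only [dif_pos hk]
        exact (hch k hk).choose_spec.1
      have hwb1 : ∀ k, k < d (i+1) →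
          vv v (w k - B (i+1) k) ≤ vv v (B (i+1) k) * dd i (lev k) := by
        intro k hk
        rw [hwdef]; simp only [dif_pos hk]
        exact (hch k hk).choose_spec.2.1
      have hwb2 : ∀ k, k < d (i+1) → vv v (w k - B (i+1) k) < vv v (B (i+1) k) := by
        intro k hk
        rw [hwdef]; simp only [dif_pos hk]
        exact (hch k hk).choose_spec.2.2
      have hTw : TFam v (d (i+1)) w (P (i+1)) := tfam_perturb v hT1 hwb2
      have hwU : ∀ k, k < d (i+1) → w k ∈ W i i := fun k hk =>
        hWsub i (lev k) (le_trans (by omega) (hlev_ge k (i+1) hi1m hk)) (hlev_le k) (hwmem k hk)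
      have hfr : Module.finrank K (W i i) = d i := hWdim i i le_rfl him
      have hdle : d (i+1) ≤ d i := hd_le i (i+1) (by omega) hi1m
      obtain ⟨b', p', hT', hmem', hpre⟩ := tfam_complete v (W i i)
        (Module.finrank K (W i i) - d (i+1)) (d (i+1)) w (P (i+1)) hTw hwU (by omega)
      rw [hfr] at hT' hmem'
      refine ⟨Function.update B i b', Function.update P i p', ?_, ?_⟩
      · intro i' h1 h2
        by_cases he : i' = i
        · subst he
          simp only [Function.update_self]
          refine ⟨hT', fun k hk => ?_⟩
          by_cases hk1 : k < d (i+1)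
          · rw [(hpre k hk1).1]
            exact hwmem k hk1
          · have hlevi : lev k = i := by
              refine le_antisymm ?_ (hlev_ge k i him hk)
              by_contra hcon
              push_neg at hcon
              have hs1 : k < d (lev k) := hlev_spec k i him hk
              have hs2 : d (lev k) ≤ d (i+1) := hd_le (i+1) (lev k) hcon (hlev_le k)
              omega
            rw [hlevi]
            exact hmem' k hk
        · simp only [Function.update_of_ne he]
          exact hrow i' (by omega) h2
      · intro i' h1 h2 k hk
        by_cases he : i' = i
        · subst he
          simp only [Function.update_self,
            Function.update_of_ne (show i + 1 ≠ i by omega)]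
          rw [(hpre k hk).1]
          exact hwb1 k hk
        · simp only [Function.update_of_ne he,
            Function.update_of_ne (show i' + 1 ≠ i by omega)]
          exact hrel i' (by omega) h2 k hk
  -- assemble the final family
  obtain ⟨B, P, hrow, hrel⟩ := main m le_rfl
  refine ⟨fun i j => Submodule.span K (Set.range fun k : Fin (d j) => B i k), ?_, ?_, ?_, ?_, ?_⟩
  · -- dimensions
    intro i j hij hjm
    have hT := (hrow i (by omega) (le_trans hij hjm)).1
    have hli := tfam_linearIndependent v hT (hd_le i j hij hjm)
    show Module.finrank K (Submodule.span K (Set.range fun k : Fin (d j) => B i (k : ℕ))) = d j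
    rw [finrank_span_eq_card hli, Fintype.card_fin]
  · -- containment in the diagonal
    intro i j hij hjm
    apply Submodule.span_le.mpr
    rintro x ⟨k, rfl⟩
    exact Submodule.subset_span ⟨⟨k.1, lt_of_lt_of_le k.2 (hd_le i j hij hjm)⟩, rfl⟩
  · -- condition (iii)
    intro i j hij hjm
    have hi1m : i + 1 ≤ m := by omega
    have hTj : TFam v (d (i+1)) (B (i+1)) (P (i+1)) := (hrow (i+1) (by omega) hi1m).1
    have hdj1 : d j ≤ d (i+1) := hd_le (i+1) j hij hjm
    unfold CondIII
    by_cases hT : lam j = ⊤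
    · rw [if_pos hT]
      have hBeq : (fun k : Fin (d j) => B (i+1) (k : ℕ)) = fun k : Fin (d j) => B i (k : ℕ) := by
        funext k
        have hk : (k : ℕ) < d (i+1) := lt_of_lt_of_le k.2 hdj1
        have hrelk := hrel i (by omega) hi1m k hk
        have hlevtop : lam (lev (k : ℕ)) = ⊤ := by
          have hjlev : j ≤ lev (k : ℕ) := hlev_ge k j hjm k.2
          have hle2 := hlam_le j (lev (k : ℕ)) hjlev (hlev_le (k : ℕ))
          rw [hT] at hle2
          exact top_le_iff.mp hle2
        have h0 : dd i (lev (k : ℕ)) = 0 := by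
          rw [hdd]; simp [hlevtop]
        rw [h0, mul_zero, le_zero_iff, Aux.vv_eq_zero_iff] at hrelk
        exact (sub_eq_zero.mp hrelk).symm
      show Submodule.span K (Set.range fun k : Fin (d j) => B (i+1) (k : ℕ))
          = Submodule.span K (Set.range fun k : Fin (d j) => B i (k : ℕ))
      rw [hBeq]
    · rw [if_neg hT]
      have hlamij : lam i < lam j := hlam_lt i j hij hjm
      have hitop : lam i ≠ ⊤ := ne_top_of_lt hlamij
      obtain ⟨a', ha'⟩ := WithTop.ne_top_iff_exists.mp hitop
      obtain ⟨b', hb'⟩ := WithTop.ne_top_iff_exists.mp hT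
      refine ⟨a', b', ha'.symm, hb'.symm, ?_⟩
      have ha0 : a' ≠ 0 := fun h0 => hlam0 i (by omega) (by rw [← ha', h0]; rfl)
      have hb0 : b' ≠ 0 := fun h0 => hlam0 j hjm (by rw [← hb', h0]; rfl)
      intro u hu
      obtain ⟨c, hc⟩ := (Submodule.mem_span_range_iff_exists_fun K).mp hu
      set c' : ℕ → K := fun k => if hk : k < d j then c ⟨k, hk⟩ else 0 with hc'
      have hucv : u = ∑ k ∈ Finset.range (d j), c' k • B (i+1) k := by
        rw [← hc, ← Fin.sum_univ_eq_sum_range (fun k => c' k • B (i+1) k) (d j)]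
        apply Finset.sum_congr rfl
        intro k _
        simp [hc', k.2]
      set wv : Fin n → K := ∑ k ∈ Finset.range (d j), c' k • B i k with hwv
      have hwmem : wv ∈ Submodule.span K (Set.range fun k : Fin (d j) => B i (k : ℕ)) := by
        apply Submodule.sum_mem
        intro k hk
        exact Submodule.smul_mem _ _
          (Submodule.subset_span ⟨⟨k, Finset.mem_range.mp hk⟩, rfl⟩)
      refine ⟨wv, hwmem, ?_⟩
      have hdiff : u - wv = ∑ k ∈ Finset.range (d j), c' k • (B (i+1) k - B i k) := by
        rw [hucv, hwv, ← Finset.sum_sub_distrib]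
        apply Finset.sum_congr rfl
        intro k _
        rw [smul_sub]
      have hvvu : vv v u = (Finset.range (d j)).sup (fun k => v (c' k) * vv v (B (i+1) k)) := by
        rw [hucv]
        exact tfam_sum_eq v (tfam_mono v hTj hdj1) c'
      rw [hdiff]
      refine le_trans (Aux.vv_sum_le v _ _) ?_
      apply Finset.sup_le
      intro k hk
      have hkj : k < d j := Finset.mem_range.mp hk
      have hkd1 : k < d (i+1) := lt_of_lt_of_le hkj hdj1
      rw [Aux.vv_smul]
      have hrelk := hrel i (by omega) hi1m k hkd1
      have hsym : vv v (B (i+1) k - B i k) = vv v (B i k - B (i+1) k) := by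
        rw [show B (i+1) k - B i k = -(B i k - B (i+1) k) by ring, Aux.vv_neg]
      have hddle : dd i (lev k) ≤ a' / b' := by
        by_cases hLtop : lam (lev k) = ⊤
        · rw [hdd]
          simp only [hLtop, WithTop.untopD_top, div_zero]
          exact zero_le'
        · obtain ⟨cc, hcc⟩ := WithTop.ne_top_iff_exists.mp hLtop
          have hcc0 : cc ≠ 0 := fun h0 => hlam0 (lev k) (hlev_le k) (by rw [← hcc, h0]; rfl)
          have hble : b' ≤ cc := by
            have hjlev : j ≤ lev k := hlev_ge k j hjm hkj
            have hle2 := hlam_le j (lev k) hjlev (hlev_le k)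
            rw [← hb', ← hcc] at hle2
            exact_mod_cast hle2
          rw [hdd]
          simp only [← ha', ← hcc, WithTop.untopD_coe]
          exact (div_le_div_iff_of_pos_left (zero_lt_iff.mpr ha0) (zero_lt_iff.mpr hcc0) (zero_lt_iff.mpr hb0)).mpr hble
      calc v (c' k) * vv v (B (i+1) k - B i k)
          ≤ v (c' k) * (vv v (B (i+1) k) * (a' / b')) := by
            apply mul_le_mul_right
            rw [hsym]
            exact le_trans hrelk (mul_le_mul_right hddle _)
        _ = (v (c' k) * vv v (B (i+1) k)) * (a' / b') := by rw [mul_assoc]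
        _ ≤ vv v u * (a' / b') := by
            apply mul_le_mul_left
            rw [hvvu]
            exact Finset.le_sup (f := fun k => v (c' k) * vv v (B (i+1) k)) hk
  · -- the diagonal
    intro i him
    apply Submodule.eq_of_le_of_finrank_le
    · apply Submodule.span_le.mpr
      rintro x ⟨k, rfl⟩
      exact hWsub i (lev (k : ℕ)) (hlev_ge k i him k.2) (hlev_le (k : ℕ))
        ((hrow i (by omega) him).2 k k.2)
    · have hT := (hrow i (by omega) him).1
      have hli := tfam_linearIndependent v hT le_rfl
      rw [hWdim i i le_rfl him, finrank_span_eq_card hli, Fintype.card_fin]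
  · -- nesting
    intro i j hij hjm
    apply Submodule.span_le.mpr
    rintro x ⟨k, rfl⟩
    exact Submodule.subset_span ⟨⟨k.1, lt_of_lt_of_le k.2 (hdmono j (by omega))⟩, rfl⟩


end
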